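/- For any δ' in a nonempty open interval of values, if two triples (j,k,ℓ) and (j',k',ℓ') of naturals satisfy that h^{δ' j + ℓ}ε(h)^k and h^{δ' j' + ℓ'}ε(h)^{k'} are comparable as h → 0 for all δ' in that interval, then j = j'. -/
import Mathlib

lemma aux_nonneg (a M h₀ : ℝ) (hM : 0 < M) (hh₀ : 0 < h₀)
    (H : ∀ h : ℝ, 0 < h → h < h₀ → h ^ a ≤ M) : 0 ≤ a := by
  by_contra hlt
  push_neg at hlt
  have ha : a ≠ 0 := ne_of_lt hlt
  set x := min (h₀ / 2) ((M + 1) ^ (1 / a)) with hx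
  have hx0 : 0 < x := lt_min (by linarith) (Real.rpow_pos_of_pos (by linarith) _)
  have hxh₀ : x < h₀ := lt_of_le_of_lt (min_le_left _ _) (by linarith)
  have h1 : x ^ a ≤ M := H x hx0 hxh₀
  have h2 : (M + 1 : ℝ) ≤ x ^ a := by
    have hle : x ≤ (M + 1) ^ (1 / a) := min_le_right _ _
    calc (M + 1 : ℝ) = ((M + 1) ^ (1 / a)) ^ a := by
          rw [← Real.rpow_mul (by linarith : (0:ℝ) ≤ M + 1), one_div,
            inv_mul_cancel₀ ha, Real.rpow_one]
      _ ≤ x ^ a := Real.rpow_le_rpow_of_nonpos hx0 hle (le_of_lt hlt)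
  linarith

/-- If for all `δ'` in a nonempty open interval the functions
`h ↦ h^{δ'j+ℓ} ε(h)^k` and `h ↦ h^{δ'j'+ℓ'} ε(h)^{k'}` are comparable as `h → 0⁺`,
then `j = j'`. Here `ε` satisfies `h^N ≤ ε(h) ≤ h^δ` on `(0,1)`. -/
theorem stmt_12 (δ N : ℝ) (hδ : 0 < δ) (hδN : δ < N)
    (ε : ℝ → ℝ) (hε : ∀ h : ℝ, 0 < h → h < 1 → h ^ N ≤ ε h ∧ ε h ≤ h ^ δ)
    (j j' k k' ℓ ℓ' : ℕ) (δ₁ δ₂ : ℝ) (hδ₁₂ : δ₁ < δ₂)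
    (hcomp : ∀ δ' : ℝ, δ₁ < δ' → δ' < δ₂ →
      ∃ C : ℝ, 0 < C ∧ ∃ h₀ : ℝ, 0 < h₀ ∧ h₀ ≤ 1 ∧
        ∀ h : ℝ, 0 < h → h < h₀ →
          (1 / C) * (h ^ (δ' * (j' : ℝ) + (ℓ' : ℝ)) * ε h ^ k') ≤
              h ^ (δ' * (j : ℝ) + (ℓ : ℝ)) * ε h ^ k ∧
            h ^ (δ' * (j : ℝ) + (ℓ : ℝ)) * ε h ^ k ≤
              C * (h ^ (δ' * (j' : ℝ) + (ℓ' : ℝ)) * ε h ^ k')) :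
    j = j' := by
  have ht0 : 0 < (δ₂ - δ₁) / 3 := by linarith
  set t := (δ₂ - δ₁) / 3 with ht
  obtain ⟨C₁, hC₁, h₁, hh₁, hh₁1, H₁⟩ := hcomp (δ₁ + t) (by linarith) (by linarith)
  obtain ⟨C₂, hC₂, h₂, hh₂, hh₂1, H₂⟩ := hcomp (δ₁ + 2 * t) (by linarith) (by linarith)
  have hC : 0 < C₁ * C₂ := mul_pos hC₁ hC₂
  have hmin : 0 < min h₁ h₂ := lt_min hh₁ hh₂
  have key : ∀ h : ℝ, 0 < h → h < min h₁ h₂ →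
      h ^ (t * ((j : ℝ) - (j' : ℝ))) ≤ C₁ * C₂ ∧
      h ^ (t * ((j' : ℝ) - (j : ℝ))) ≤ C₁ * C₂ := by
    intro h hp hlt
    have hlt1 : h < h₁ := lt_of_lt_of_le hlt (min_le_left _ _)
    have hlt2 : h < h₂ := lt_of_lt_of_le hlt (min_le_right _ _)
    have hone : h < 1 := lt_of_lt_of_le hlt1 hh₁1
    have hεpos : 0 < ε h := lt_of_lt_of_le (Real.rpow_pos_of_pos hp N) (hε h hp hone).1
    obtain ⟨A₁, B₁⟩ := H₁ h hp hlt1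
    obtain ⟨A₂, B₂⟩ := H₂ h hp hlt2
    have e1 : h ^ ((δ₁ + 2 * t) * (j : ℝ) + (ℓ : ℝ))
        = h ^ ((δ₁ + t) * (j : ℝ) + (ℓ : ℝ)) * h ^ (t * (j : ℝ)) := by
      rw [← Real.rpow_add hp]; ring_nf
    have e2 : h ^ ((δ₁ + 2 * t) * (j' : ℝ) + (ℓ' : ℝ))
        = h ^ ((δ₁ + t) * (j' : ℝ) + (ℓ' : ℝ)) * h ^ (t * (j' : ℝ)) := by
      rw [← Real.rpow_add hp]; ring_nf
    set F := h ^ ((δ₁ + t) * (j : ℝ) + (ℓ : ℝ)) * ε h ^ k with hF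
    set G := h ^ ((δ₁ + t) * (j' : ℝ) + (ℓ' : ℝ)) * ε h ^ k' with hG
    set X := h ^ (t * (j : ℝ)) with hX
    set Y := h ^ (t * (j' : ℝ)) with hY
    have hFpos : 0 < F := mul_pos (Real.rpow_pos_of_pos hp _) (pow_pos hεpos _)
    have hGpos : 0 < G := mul_pos (Real.rpow_pos_of_pos hp _) (pow_pos hεpos _)
    have hpj : 0 < X := Real.rpow_pos_of_pos hp _
    have hpj' : 0 < Y := Real.rpow_pos_of_pos hp _
    rw [e1, e2] at A₂ B₂
    have hA₁ : G ≤ C₁ * F := by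
      rw [div_mul_eq_mul_div, div_le_iff₀ hC₁] at A₁
      calc G = 1 * G := (one_mul G).symm
        _ ≤ F * C₁ := A₁
        _ = C₁ * F := mul_comm _ _
    have B₂' : F * X ≤ C₂ * (G * Y) := by
      calc F * X = h ^ ((δ₁ + t) * (j : ℝ) + (ℓ : ℝ)) * X * ε h ^ k := by
            rw [hF]; ring
        _ ≤ C₂ * (h ^ ((δ₁ + t) * (j' : ℝ) + (ℓ' : ℝ)) * Y * ε h ^ k') := B₂
        _ = C₂ * (G * Y) := by rw [hG]; ring
    have A₂' : G * Y ≤ C₂ * (F * X) := by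
      rw [div_mul_eq_mul_div, div_le_iff₀ hC₂, one_mul] at A₂
      calc G * Y = h ^ ((δ₁ + t) * (j' : ℝ) + (ℓ' : ℝ)) * Y * ε h ^ k' := by
            rw [hG]; ring
        _ ≤ h ^ ((δ₁ + t) * (j : ℝ) + (ℓ : ℝ)) * X * ε h ^ k * C₂ := A₂
        _ = C₂ * (F * X) := by rw [hF]; ring
    have ineq1 : G * X ≤ G * ((C₁ * C₂) * Y) := by
      calc G * X ≤ (C₁ * F) * X := mul_le_mul_of_nonneg_right hA₁ hpj.le
        _ = C₁ * (F * X) := by ring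
        _ ≤ C₁ * (C₂ * (G * Y)) := mul_le_mul_of_nonneg_left B₂' hC₁.le
        _ = G * ((C₁ * C₂) * Y) := by ring
    have ineq2 : G * Y ≤ G * ((C₁ * C₂) * X) := by
      calc G * Y ≤ C₂ * (F * X) := A₂'
        _ ≤ C₂ * ((C₁ * G) * X) := by
            exact mul_le_mul_of_nonneg_left (mul_le_mul_of_nonneg_right B₁ hpj.le) hC₂.le
        _ = G * ((C₁ * C₂) * X) := by ring
    have hXY : X ≤ (C₁ * C₂) * Y := le_of_mul_le_mul_left ineq1 hGpos
    have hYX : Y ≤ (C₁ * C₂) * X := le_of_mul_le_mul_left ineq2 hGpos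
    constructor
    · rw [mul_sub, Real.rpow_sub hp, div_le_iff₀ hpj']
      calc h ^ (t * (j : ℝ)) = X := rfl
        _ ≤ (C₁ * C₂) * Y := hXY
        _ = C₁ * C₂ * h ^ (t * (j' : ℝ)) := rfl
    · rw [mul_sub, Real.rpow_sub hp, div_le_iff₀ hpj]
      calc h ^ (t * (j' : ℝ)) = Y := rfl
        _ ≤ (C₁ * C₂) * X := hYX
        _ = C₁ * C₂ * h ^ (t * (j : ℝ)) := rfl
  have n1 : 0 ≤ t * ((j : ℝ) - (j' : ℝ)) :=
    aux_nonneg _ _ _ hC hmin fun h hp hl => (key h hp hl).1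
  have n2 : 0 ≤ t * ((j' : ℝ) - (j : ℝ)) :=
    aux_nonneg _ _ _ hC hmin fun h hp hl => (key h hp hl).2
  have h1 : 0 ≤ (j : ℝ) - (j' : ℝ) := nonneg_of_mul_nonneg_right n1 ht0
  have h2 : 0 ≤ (j' : ℝ) - (j : ℝ) := nonneg_of_mul_nonneg_right n2 ht0
  have : (j : ℝ) = (j' : ℝ) := by linarith
  exact_mod_cast this
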